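/- Let n ≥ 2 be an integer with sequence a_0 = n, a_{k+1} = a_k^2 - 1. For each k, the set of primes dividing at least one of a_0, a_1, ..., a_{k+1} equals the set of primes dividing the product a_k * a_{k+1}. -/
import Mathlib


/-- The sequence `a 0 = n`, `a (k+1) = (a k)^2 - 1`. -/
def seqA (n : ℤ) : ℕ → ℤ
  | 0 => n
  | k + 1 => (seqA n k) ^ 2 - 1

lemma seqA_dvd_step (n : ℤ) (j : ℕ) : seqA n j ∣ seqA n (j + 2) := by
  have h : seqA n (j + 2) = seqA n j * (seqA n j * (seqA n j ^ 2 - 2)) := by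
    show seqA n (j + 1) ^ 2 - 1 = _
    show (seqA n j ^ 2 - 1) ^ 2 - 1 = _
    ring
  rw [h]
  exact Dvd.intro _ rfl

lemma seqA_dvd_or (n : ℤ) (k : ℕ) : ∀ j ≤ k + 1,
    seqA n j ∣ seqA n k ∨ seqA n j ∣ seqA n (k + 1) := by
  induction k with
  | zero =>
    intro j hj
    interval_cases j
    · exact Or.inl dvd_rfl
    · exact Or.inr dvd_rfl
  | succ k ih =>
    intro j hj
    rcases eq_or_lt_of_le hj with h | h
    · exact Or.inr (h ▸ dvd_rfl)
    · rcases ih j (Nat.lt_succ_iff.mp h) with h1 | h1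
      · exact Or.inr (h1.trans (seqA_dvd_step n k))
      · exact Or.inl h1

theorem primes_dividing_initial_terms (n : ℤ) (hn : 2 ≤ n) (k : ℕ) :
    {p : ℕ | p.Prime ∧ ∃ j ≤ k + 1, (p : ℤ) ∣ seqA n j} =
      {p : ℕ | p.Prime ∧ (p : ℤ) ∣ seqA n k * seqA n (k + 1)} := by
  ext p
  simp only [Set.mem_setOf_eq]
  constructor
  · rintro ⟨hp, j, hj, hd⟩
    refine ⟨hp, ?_⟩
    rcases seqA_dvd_or n k j hj with h | h
    · exact (hd.trans h).mul_right _
    · exact (hd.trans h).mul_left _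
  · rintro ⟨hp, hd⟩
    refine ⟨hp, ?_⟩
    have hpz : Prime (p : ℤ) := Nat.prime_iff_prime_int.mp hp
    rcases hpz.dvd_mul.mp hd with h | h
    · exact ⟨k, Nat.le_succ k, h⟩
    · exact ⟨k + 1, le_rfl, h⟩
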